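/- Under the hypotheses of the well-posed advection formulation (Ω bounded Lipschitz, ∇·β = 0, ρ ≥ ρ₀ > 0, dist(Γ₋,Γ₊) > 0), for every u in the graph space V = W (with trace u|_{Γ₋} ∈ L²(Γ₋;|n·β|)), choosing the test tuple v̂ = (u, tr₋ u) gives a(v̂, u) = (1/2)∫_{∂Ω}|n·β|u² + ∫_Ω ρu² ≥ ‖v̂‖_L ‖ρ^{1/2}u‖_{L²(Ω)}, where ‖v̂‖_L = (∫_Ω ρu² + ∫_{Γ₋}|n·β| u²)^{1/2}. -/

import Mathlib

open MeasureTheory RealInnerProductSpace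

lemma aux_setIntegral {X : Type*} [MeasurableSpace X] (σ : Measure X) (g : X → ℝ)
    (hg : Integrable g σ) (s : Set X) (hs : ∀ x ∈ s, g x ≤ 0) (hs' : ∀ x ∉ s, 0 ≤ g x) :
    (∫ x in s, g x ∂σ) = ∫ x, min (g x) 0 ∂σ ∧
    (∫ x in s, |g x| ∂σ) = -∫ x, min (g x) 0 ∂σ := by
  set g' : X → ℝ := hg.1.mk g with hg'def
  have hg'm := hg.1.stronglyMeasurable_mk
  have hgg' : g =ᵐ[σ] g' := hg.1.ae_eq_mk
  have hnull : σ {x | ¬ g x = g' x} = 0 := by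
    simpa [Filter.EventuallyEq, ae_iff] using hgg'
  set p : X → ℝ := fun x => max (g' x) 0 with hp
  set m : X → ℝ := fun x => min (g' x) 0 with hm
  set t : Set X := {x | g' x < 0} with htdef
  have ht : MeasurableSet t := measurableSet_lt hg'm.measurable measurable_const
  have hg'int : Integrable g' σ := hg.congr hgg'
  have hpint : Integrable p σ := hg'int.pos_part
  have hmaxmin : ∀ x, max (-g' x) 0 = -(min (g' x) 0) := by
    intro x
    rcases le_total (g' x) 0 with h | h
    · rw [min_eq_left h, max_eq_left (by linarith)]
    · rw [min_eq_right h, max_eq_right (by linarith), neg_zero]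
  have hmint : Integrable m σ := by
    have h := hg'int.neg_part.neg
    refine h.congr (Filter.Eventually.of_forall fun x => ?_)
    simp only [Pi.neg_apply, hmaxmin x, neg_neg, hm]
  -- Step 3: ∫_s p = 0
  have hps : ∀ᵐ x ∂(σ.restrict s), p x = 0 := by
    rw [ae_iff]
    have hset : {x | ¬ p x = 0} = {x | 0 < g' x} := by
      ext x
      simp only [Set.mem_setOf_eq, hp, max_eq_right_iff, not_le]
    rw [hset, Measure.restrict_apply (measurableSet_lt measurable_const hg'm.measurable)]
    refine measure_mono_null ?_ hnull
    intro x ⟨hx1, hx2⟩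
    exact fun h => absurd (h ▸ hx1) (not_lt.2 (hs x hx2))
  have hIsp : (∫ x in s, p x ∂σ) = 0 := integral_eq_zero_of_ae hps
  -- Step 4: ∫_s m = ∫ m
  have hmind : (t.indicator m) = m := by
    funext x
    by_cases hx : x ∈ t
    · rw [Set.indicator_of_mem hx]
    · rw [Set.indicator_of_notMem hx]
      have : 0 ≤ g' x := not_lt.1 hx
      simp [hm, min_eq_right this]
  have h_ts : (t ∩ s : Set X) =ᵐ[σ] t := by
    rw [ae_eq_set]
    constructor
    · simp [Set.diff_eq_empty.2 Set.inter_subset_left]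
    · refine measure_mono_null ?_ hnull
      intro x ⟨hx1, hx2⟩
      have hx2' : x ∉ s := fun h => hx2 ⟨hx1, h⟩
      have h1 : g' x < 0 := hx1
      have h2 : 0 ≤ g x := hs' x hx2'
      exact fun h => absurd (h ▸ h2) (not_le.2 h1)
  have hIsm : (∫ x in s, m x ∂σ) = ∫ x, m x ∂σ := by
    calc (∫ x in s, m x ∂σ) = ∫ x, t.indicator m x ∂(σ.restrict s) := by rw [hmind]
    _ = ∫ x in t, m x ∂(σ.restrict s) := integral_indicator ht
    _ = ∫ x, m x ∂(σ.restrict (t ∩ s)) := by rw [Measure.restrict_restrict ht]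
    _ = ∫ x, m x ∂(σ.restrict t) := by rw [Measure.restrict_congr_set h_ts]
    _ = ∫ x, t.indicator m x ∂σ := (integral_indicator ht).symm
    _ = ∫ x, m x ∂σ := by rw [hmind]
  have hmm : (∫ x, m x ∂σ) = ∫ x, min (g x) 0 ∂σ := by
    refine integral_congr_ae (hgg'.mono fun x hx => ?_)
    simp [hm, hx]
  have hgg's : g =ᵐ[σ.restrict s] g' := ae_restrict_of_ae hgg'
  have hg'pm : ∀ x, g' x = p x + m x := fun x => by
    have h := max_add_min (g' x) 0
    rw [add_zero] at h
    exact h.symm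
  have habs : ∀ x, |g' x| = p x - m x := fun x => by
    simp only [hp, hm]
    rw [max_sub_min_eq_abs]; simp
  have e1 : (∫ x in s, g x ∂σ) = ∫ x, min (g x) 0 ∂σ := by
    calc (∫ x in s, g x ∂σ) = ∫ x in s, g' x ∂σ := integral_congr_ae hgg's
    _ = ∫ x in s, (p x + m x) ∂σ := by simp_rw [← hg'pm]
    _ = (∫ x in s, p x ∂σ) + ∫ x in s, m x ∂σ :=
        integral_add hpint.restrict hmint.restrict
    _ = ∫ x, min (g x) 0 ∂σ := by rw [hIsp, hIsm, hmm, zero_add]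
  refine ⟨e1, ?_⟩
  calc (∫ x in s, |g x| ∂σ) = ∫ x in s, |g' x| ∂σ :=
        integral_congr_ae (hgg's.mono fun x hx => by dsimp only; rw [hx])
  _ = ∫ x in s, (p x - m x) ∂σ := by simp_rw [habs]
  _ = (∫ x in s, p x ∂σ) - ∫ x in s, m x ∂σ :=
      integral_sub hpint.restrict hmint.restrict
  _ = -∫ x, min (g x) 0 ∂σ := by rw [hIsp, hIsm, hmm, zero_sub]

lemma euclid_sum {d : ℕ} (v : EuclideanSpace ℝ (Fin d)) :
    ∑ i, v i • EuclideanSpace.single i (1 : ℝ) = v := by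
  ext j
  rw [show ((∑ i, v i • EuclideanSpace.single i (1:ℝ)) j) = ∑ i, (v i • EuclideanSpace.single i (1:ℝ)) j from by rw [WithLp.ofLp_sum, Finset.sum_apply]]
  simp [EuclideanSpace.single_apply]

lemma fderiv_along {d : ℕ} (u : EuclideanSpace ℝ (Fin d) → ℝ) (x v : EuclideanSpace ℝ (Fin d)) :
    ∑ i, v i * fderiv ℝ u x (EuclideanSpace.single i 1) = fderiv ℝ u x v := by
  calc ∑ i, v i * fderiv ℝ u x (EuclideanSpace.single i 1)
      = ∑ i, fderiv ℝ u x (v i • EuclideanSpace.single i 1) := by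
        simp [smul_eq_mul]
  _ = fderiv ℝ u x (∑ i, v i • EuclideanSpace.single i 1) := (map_sum _ _ _).symm
  _ = fderiv ℝ u x v := by rw [euclid_sum]

lemma div_key {d : ℕ} (u : EuclideanSpace ℝ (Fin d) → ℝ)
    (β : EuclideanSpace ℝ (Fin d) → EuclideanSpace ℝ (Fin d))
    (hu : ContDiff ℝ 1 u) (hβ : ContDiff ℝ 1 β) (x : EuclideanSpace ℝ (Fin d))
    (hβd : ∑ i, fderiv ℝ (fun y => β y i) x (EuclideanSpace.single i 1) = 0) :
    ∑ i, fderiv ℝ (fun y => ((fun z => (u z * u z) • β z) y) i) x (EuclideanSpace.single i 1)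
      = 2 * (u x * fderiv ℝ u x (β x)) := by
  have hux : DifferentiableAt ℝ u x := hu.differentiable one_ne_zero x
  have huu : DifferentiableAt ℝ (fun y => u y * u y) x := hux.mul hux
  have hβi : ∀ i, DifferentiableAt ℝ (fun y => β y i) x := by
    intro i
    have h := (EuclideanSpace.proj (𝕜 := ℝ) i).differentiableAt.comp x
      (hβ.differentiable one_ne_zero x)
    exact h
  have hFi : ∀ i, (fun y => ((fun z => (u z * u z) • β z) y) i)
      = fun y => (u y * u y) * β y i := fun i => funext fun y => by
    simp [PiLp.smul_apply, smul_eq_mul]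
  have step : ∀ i, fderiv ℝ (fun y => ((fun z => (u z * u z) • β z) y) i) x
        (EuclideanSpace.single i 1)
      = (u x * u x) * fderiv ℝ (fun y => β y i) x (EuclideanSpace.single i 1)
        + β x i * (2 * (u x * fderiv ℝ u x (EuclideanSpace.single i 1))) := by
    intro i
    rw [hFi i, fderiv_fun_mul huu (hβi i)]
    have huu' : fderiv ℝ (fun y => u y * u y) x (EuclideanSpace.single i 1)
        = 2 * (u x * fderiv ℝ u x (EuclideanSpace.single i 1)) := by
      rw [fderiv_fun_mul hux hux]
      simp [smul_eq_mul]; ring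
    simp only [ContinuousLinearMap.add_apply, ContinuousLinearMap.coe_smul',
      Pi.smul_apply, smul_eq_mul]
    rw [huu']
  calc ∑ i, fderiv ℝ (fun y => ((fun z => (u z * u z) • β z) y) i) x (EuclideanSpace.single i 1)
      = ∑ i, ((u x * u x) * fderiv ℝ (fun y => β y i) x (EuclideanSpace.single i 1)
        + β x i * (2 * (u x * fderiv ℝ u x (EuclideanSpace.single i 1)))) := by
        exact Finset.sum_congr rfl fun i _ => step i
  _ = (u x * u x) * (∑ i, fderiv ℝ (fun y => β y i) x (EuclideanSpace.single i 1))
        + 2 * u x * ∑ i, β x i * fderiv ℝ u x (EuclideanSpace.single i 1) := by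
        rw [Finset.sum_add_distrib, Finset.mul_sum, Finset.mul_sum]
        congr 1
        exact Finset.sum_congr rfl fun i _ => by ring
  _ = 2 * (u x * fderiv ℝ u x (β x)) := by
        rw [hβd, fderiv_along]; ring

theorem advection_infsup_coercivity {d : ℕ}
    (Ω : Set (EuclideanSpace ℝ (Fin d))) (hΩo : IsOpen Ω) (hΩb : Bornology.IsBounded Ω)
    (σ : Measure (EuclideanSpace ℝ (Fin d)))
    (nv : EuclideanSpace ℝ (Fin d) → EuclideanSpace ℝ (Fin d))
    (hdiv : ∀ F : EuclideanSpace ℝ (Fin d) → EuclideanSpace ℝ (Fin d), ContDiff ℝ 1 F →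
      ∫ x in Ω, (∑ i, fderiv ℝ (fun y => F y i) x (EuclideanSpace.single i 1)) =
        ∫ x, ⟪nv x, F x⟫ ∂σ)
    (β : EuclideanSpace ℝ (Fin d) → EuclideanSpace ℝ (Fin d)) (hβ : ContDiff ℝ 1 β)
    (hβdiv : ∀ x ∈ Ω, (∑ i, fderiv ℝ (fun y => β y i) x (EuclideanSpace.single i 1)) = 0)
    (ρ : EuclideanSpace ℝ (Fin d) → ℝ) (ρ₀ : ℝ) (hρ₀ : 0 < ρ₀) (hρ : ∀ x ∈ Ω, ρ₀ ≤ ρ x)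
    (hsep : ∃ δ > (0 : ℝ), ∀ x ∈ {x | ⟪nv x, β x⟫ < 0}, ∀ y ∈ {y | 0 < ⟪nv y, β y⟫},
      δ ≤ dist x y)
    (u : EuclideanSpace ℝ (Fin d) → ℝ) (hu : ContDiff ℝ 1 u)
    (h1 : IntegrableOn (fun x => u x * fderiv ℝ u x (β x)) Ω volume)
    (h2 : IntegrableOn (fun x => ρ x * (u x) ^ 2) Ω volume)
    (h3 : Integrable (fun x => ⟪nv x, β x⟫ * (u x) ^ 2) σ) :
    (∫ x in Ω, u x * (fderiv ℝ u x (β x) + ρ x * u x)) -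
        (∫ x in {x | ⟪nv x, β x⟫ < 0}, ⟪nv x, β x⟫ * (u x) ^ 2 ∂σ) =
      (1 / 2) * (∫ x, |⟪nv x, β x⟫| * (u x) ^ 2 ∂σ) + (∫ x in Ω, ρ x * (u x) ^ 2) ∧
    Real.sqrt ((∫ x in Ω, ρ x * (u x) ^ 2) +
          ∫ x in {x | ⟪nv x, β x⟫ < 0}, |⟪nv x, β x⟫| * (u x) ^ 2 ∂σ) *
        Real.sqrt (∫ x in Ω, ρ x * (u x) ^ 2) ≤
      (∫ x in Ω, u x * (fderiv ℝ u x (β x) + ρ x * u x)) -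
        (∫ x in {x | ⟪nv x, β x⟫ < 0}, ⟪nv x, β x⟫ * (u x) ^ 2 ∂σ) := by
  classical
  set g : EuclideanSpace ℝ (Fin d) → ℝ := fun x => ⟪nv x, β x⟫ * (u x) ^ 2 with hgdef
  set s : Set (EuclideanSpace ℝ (Fin d)) := {x | ⟪nv x, β x⟫ < 0} with hsdef
  -- divergence theorem applied to F = (u·u) • β
  set F : EuclideanSpace ℝ (Fin d) → EuclideanSpace ℝ (Fin d) :=
    fun x => (u x * u x) • β x with hFdef
  have hF : ContDiff ℝ 1 F := (hu.mul hu).smul hβ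
  have hdivF := hdiv F hF
  have hleft : (∫ x in Ω, (∑ i, fderiv ℝ (fun y => F y i) x (EuclideanSpace.single i 1)))
      = ∫ x in Ω, 2 * (u x * fderiv ℝ u x (β x)) :=
    setIntegral_congr_fun hΩo.measurableSet fun x hx => div_key u β hu hβ x (hβdiv x hx)
  have hright : (∫ x, ⟪nv x, F x⟫ ∂σ) = ∫ x, g x ∂σ := by
    refine integral_congr_ae (Filter.Eventually.of_forall fun x => ?_)
    rw [hFdef]; dsimp only
    rw [real_inner_smul_right, hgdef]; dsimp only; ring
  have hkey : 2 * (∫ x in Ω, u x * fderiv ℝ u x (β x)) = ∫ x, g x ∂σ := by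
    rw [← hright, ← hdivF, hleft, integral_const_mul]
  -- sign properties of g on s
  have hs1 : ∀ x ∈ s, g x ≤ 0 := fun x hx =>
    mul_nonpos_iff.2 (Or.inr ⟨le_of_lt hx, sq_nonneg _⟩)
  have hs2 : ∀ x ∉ s, 0 ≤ g x := fun x hx =>
    mul_nonneg (not_lt.1 hx) (sq_nonneg _)
  obtain ⟨e1, e2⟩ := aux_setIntegral σ g h3 s hs1 hs2
  -- |⟪⟫| * u² = |g|
  have habsg : ∀ x, |⟪nv x, β x⟫| * (u x) ^ 2 = |g x| := fun x => by
    rw [hgdef]; dsimp only; rw [abs_mul, abs_of_nonneg (sq_nonneg (u x))]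
  -- integrability of min/max parts
  have hmax : Integrable (fun x => max (g x) 0) σ := h3.pos_part
  have hmin : Integrable (fun x => min (g x) 0) σ := by
    have h := h3.neg_part.neg
    refine h.congr (Filter.Eventually.of_forall fun x => ?_)
    dsimp only [Pi.neg_apply]
    rcases le_total (g x) 0 with hh | hh
    · rw [min_eq_left hh, max_eq_left (by linarith), neg_neg]
    · rw [min_eq_right hh, max_eq_right (by linarith), neg_zero]
  have hsum : (∫ x, g x ∂σ) = (∫ x, max (g x) 0 ∂σ) + ∫ x, min (g x) 0 ∂σ := by
    rw [← integral_add hmax hmin]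
    refine integral_congr_ae (Filter.Eventually.of_forall fun x => ?_)
    have h := max_add_min (g x) 0
    rw [add_zero] at h
    exact h.symm
  have habsint : (∫ x, |g x| ∂σ) = (∫ x, max (g x) 0 ∂σ) - ∫ x, min (g x) 0 ∂σ := by
    rw [← integral_sub hmax hmin]
    refine integral_congr_ae (Filter.Eventually.of_forall fun x => ?_)
    have h := max_sub_min_eq_abs (g x) 0
    rw [zero_sub, abs_neg] at h
    exact h.symm
  have hmaxpos : 0 ≤ ∫ x, max (g x) 0 ∂σ :=
    integral_nonneg fun x => le_max_right _ _
  have hminneg : (∫ x, min (g x) 0 ∂σ) ≤ 0 :=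
    integral_nonpos fun x => min_le_right _ _
  have hA : 0 ≤ ∫ x in Ω, ρ x * (u x) ^ 2 :=
    setIntegral_nonneg hΩo.measurableSet fun x hx =>
      mul_nonneg (le_trans hρ₀.le (hρ x hx)) (sq_nonneg _)
  -- expand the bilinear form
  have hexp : (∫ x in Ω, u x * (fderiv ℝ u x (β x) + ρ x * u x))
      = (∫ x in Ω, u x * fderiv ℝ u x (β x)) + ∫ x in Ω, ρ x * (u x) ^ 2 := by
    rw [← integral_add h1 h2]
    refine integral_congr_ae (Filter.Eventually.of_forall fun x => ?_)
    dsimp only; ring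
  -- abbreviations
  set I := ∫ x in Ω, u x * fderiv ℝ u x (β x)
  set A := ∫ x in Ω, ρ x * (u x) ^ 2
  set Imax := ∫ x, max (g x) 0 ∂σ
  set Imin := ∫ x, min (g x) 0 ∂σ
  have hGabs : (∫ x, |⟪nv x, β x⟫| * (u x) ^ 2 ∂σ) = Imax - Imin := by
    rw [← habsint]
    exact integral_congr_ae (Filter.Eventually.of_forall fun x => habsg x)
  have hBset : (∫ x in s, |⟪nv x, β x⟫| * (u x) ^ 2 ∂σ) = -Imin := by
    rw [← e2]
    exact integral_congr_ae (Filter.Eventually.of_forall fun x => habsg x)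
  constructor
  · rw [hexp, e1, hGabs]
    linarith [hkey, hsum]
  · rw [hexp, e1, hBset]
    have hIval : I + A - Imin = (Imax - Imin) / 2 + A := by linarith [hkey, hsum]
    rw [hIval]
    have hB : (0:ℝ) ≤ -Imin := by linarith
    calc Real.sqrt (A + -Imin) * Real.sqrt A
        = Real.sqrt ((A + -Imin) * A) := (Real.sqrt_mul (by linarith) A).symm
      _ ≤ Real.sqrt ((A + -Imin / 2) ^ 2) := Real.sqrt_le_sqrt (by nlinarith)
      _ = A + -Imin / 2 := Real.sqrt_sq (by linarith)
      _ ≤ (Imax - Imin) / 2 + A := by linarith
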